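/- Let X be a complete metric space, U ⊆ X open, and f : X → ℝ ∪ {+∞} lower semicontinuous. Suppose |∇f|(x) > r > 0 for every x ∈ U with f(x) > 0. Then for every x̄ ∈ U with f(x̄) < r · d(x̄, X∖U), there exists ū with f(ū) ≤ 0 and d(ū, x̄) ≤ r⁻¹ · max(f(x̄), 0). -/

import Mathlib

open EMetric ENNReal Filter Topology

/-- The strong slope `|∇f|(x) = limsup_{u → x, u ≠ x} (f x − f u)⁺ / d(x,u)`,
with `|∇f|(x) = ∞` if `f x = ∞`. -/
noncomputable def strongSlope {X : Type*} [MetricSpace X] (f : X → EReal) (x : X) : ℝ≥0∞ :=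
  if f x = ⊤ then ⊤
  else limsup (fun u => ENNReal.ofReal ((f x - f u).toReal / dist x u)) (𝓝[≠] x)

/-- The positive part `a⁺` of an extended real, as an extended nonnegative real. -/
noncomputable def erealPos (a : EReal) : ℝ≥0∞ :=
  if a = ⊤ then ⊤ else ENNReal.ofReal a.toReal

private lemma ekeland_aux {X : Type*} [MetricSpace X] [CompleteSpace X]
    (g : X → ℝ≥0∞) (hg : LowerSemicontinuous g) (c : ℝ≥0∞) (hc0 : c ≠ 0) (hct : c ≠ ⊤)
    (x0 : X) (hx0 : g x0 ≠ ⊤) :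
    ∃ y : X, g y + c * edist x0 y ≤ g x0 ∧ ∀ u, g u + c * edist y u ≤ g y → u = y := by
  have hStrans : ∀ z z' u : X, g z' + c * edist z z' ≤ g z →
      g u + c * edist z' u ≤ g z' → g u + c * edist z u ≤ g z := by
    intro z z' u h1 h2
    calc g u + c * edist z u ≤ g u + c * (edist z z' + edist z' u) := by
          gcongr; exact edist_triangle _ _ _
      _ = (g u + c * edist z' u) + c * edist z z' := by ring
      _ ≤ g z' + c * edist z z' := by gcongr
      _ ≤ g z := h1
  have key : ∀ (n : ℕ) (z : X), ∃ z', (g z' + c * edist z z' ≤ g z) ∧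
      ∀ u, g u + c * edist z u ≤ g z → g z' ≤ g u + 2⁻¹ ^ n := by
    intro n z
    by_cases hmt : (⨅ u : {u : X // g u + c * edist z u ≤ g z}, g u) = ⊤
    · refine ⟨z, by simp, fun u hu => ?_⟩
      have h2 : (⨅ u : {u : X // g u + c * edist z u ≤ g z}, g u) ≤ g u :=
        iInf_le (fun u : {u : X // g u + c * edist z u ≤ g z} => g u) ⟨u, hu⟩
      rw [hmt] at h2
      simp [top_le_iff.mp h2]
    · have hlt : (⨅ u : {u : X // g u + c * edist z u ≤ g z}, g u) <
          (⨅ u : {u : X // g u + c * edist z u ≤ g z}, g u) + 2⁻¹ ^ n :=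
        ENNReal.lt_add_right hmt (pow_ne_zero n (ENNReal.inv_ne_zero.mpr (by norm_num)))
      obtain ⟨i, hi⟩ := iInf_lt_iff.mp hlt
      refine ⟨i.1, i.2, fun u hu => hi.le.trans (add_le_add ?_ le_rfl)⟩
      exact iInf_le_of_le ⟨u, hu⟩ le_rfl
  choose F hF1 hF2 using key
  let x : ℕ → X := fun n => Nat.rec x0 (fun n xn => F n xn) n
  have hx0' : x 0 = x0 := rfl
  have step1 : ∀ n, g (x (n+1)) + c * edist (x n) (x (n+1)) ≤ g (x n) := fun n => hF1 n (x n)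
  have step2 : ∀ n u, g u + c * edist (x n) u ≤ g (x n) → g (x (n+1)) ≤ g u + 2⁻¹ ^ n :=
    fun n => hF2 n (x n)
  have chain : ∀ n k, n ≤ k → g (x k) + c * edist (x n) (x k) ≤ g (x n) := by
    intro n k hnk
    induction k, hnk using Nat.le_induction with
    | base => simp
    | succ k hk ih => exact hStrans _ _ _ ih (step1 k)
  have anti : Antitone fun n => g (x n) := by
    intro n k hnk
    exact le_trans (le_add_right le_rfl) (chain n k hnk)
  have gfin : ∀ n, g (x n) ≠ ⊤ := fun n => (lt_of_le_of_lt (anti (Nat.zero_le n)) hx0.lt_top).ne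
  set L : ℝ≥0∞ := ⨅ n, g (x n) with hLdef
  have hL : Tendsto (fun n => g (x n)) atTop (𝓝 L) := tendsto_atTop_iInf anti
  have hLle : ∀ k, L ≤ g (x k) := fun k => hLdef ▸ iInf_le _ k
  have hLfin : L ≠ ⊤ := (lt_of_le_of_lt (iInf_le _ 0) hx0.lt_top).ne
  have bound : ∀ n k, n ≤ k → c * edist (x n) (x k) ≤ g (x n) - L := by
    intro n k hnk
    have h1 : c * edist (x n) (x k) ≤ g (x n) - g (x k) :=
      ENNReal.le_sub_of_add_le_left (gfin k) (chain n k hnk)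
    exact h1.trans (tsub_le_tsub_left (hLle k) _)
  have hcauchy : CauchySeq x := by
    rw [EMetric.cauchySeq_iff]
    intro ε hε
    have h1 : Tendsto (fun n => c⁻¹ * (g (x n) - L)) atTop (𝓝 0) := by
      have h2 : Tendsto (fun n => g (x n) - L) atTop (𝓝 (L - L)) :=
        ENNReal.Tendsto.sub hL tendsto_const_nhds (Or.inr hLfin)
      rw [tsub_self] at h2
      have := ENNReal.Tendsto.const_mul h2 (Or.inr (ENNReal.inv_ne_top.mpr hc0))
      rwa [mul_zero] at this
    obtain ⟨N, hN⟩ := (eventually_atTop.mp (h1.eventually (gt_mem_nhds hε)))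
    refine ⟨N, fun a ha b hb => ?_⟩
    have key2 : ∀ p q, N ≤ p → p ≤ q → edist (x p) (x q) < ε := by
      intro p q hp hpq
      have h3 : edist (x p) (x q) ≤ c⁻¹ * (g (x p) - L) := by
        rw [← ENNReal.div_eq_inv_mul, ENNReal.le_div_iff_mul_le (Or.inl hc0) (Or.inl hct),
          mul_comm]
        exact bound p q hpq
      calc edist (x p) (x q) ≤ c⁻¹ * (g (x p) - L) := h3
        _ ≤ c⁻¹ * (g (x N) - L) := by gcongr; exact anti hp
        _ < ε := hN N le_rfl
    rcases le_total a b with h | h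
    · exact key2 a b ha h
    · rw [edist_comm]; exact key2 b a hb h
  obtain ⟨y, hy⟩ := cauchySeq_tendsto_of_complete hcauchy
  have hgyL : g y ≤ L := by
    by_contra h
    push_neg at h
    obtain ⟨b, hb1, hb2⟩ := exists_between h
    have hev : ∀ᶠ k in atTop, b < g (x k) := hy.eventually (hg y b hb2)
    exact absurd (ge_of_tendsto hL (hev.mono fun k hk => hk.le)) (not_le.mpr hb1)
  have hy_mem : ∀ n, g y + c * edist (x n) y ≤ g (x n) := by
    intro n
    have h1 : Tendsto (fun k => c * edist (x n) (x k)) atTop (𝓝 (c * edist (x n) y)) := by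
      exact (ENNReal.continuous_const_mul hct).tendsto' _ _ rfl |>.comp
        ((continuous_const.edist continuous_id).tendsto y |>.comp hy)
    have h2 : c * edist (x n) y ≤ g (x n) - L :=
      le_of_tendsto h1 (eventually_atTop.mpr ⟨n, fun k hk => bound n k hk⟩)
    calc g y + c * edist (x n) y ≤ L + (g (x n) - L) := add_le_add hgyL h2
      _ = g (x n) := add_tsub_cancel_of_le (hLle n)
  refine ⟨y, by simpa [hx0'] using hy_mem 0, fun u hu => ?_⟩
  have huS : ∀ n, g u + c * edist (x n) u ≤ g (x n) := fun n => hStrans _ _ _ (hy_mem n) hu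
  have hstep : ∀ n, g (x (n+1)) ≤ g u + 2⁻¹ ^ n := fun n => step2 n u (huS n)
  have hLu : L ≤ g u := by
    have ht : Tendsto (fun n : ℕ => g u + (2 : ℝ≥0∞)⁻¹ ^ n) atTop (𝓝 (g u + 0)) :=
      Tendsto.const_add _ (ENNReal.tendsto_pow_atTop_nhds_zero_of_lt_one
        (by norm_num : (2 : ℝ≥0∞)⁻¹ < 1))
    rw [add_zero] at ht
    exact ge_of_tendsto' ht fun n => (hLle (n+1)).trans (hstep n)
  have hufin : g u ≠ ⊤ := by
    have h2 : g u ≤ g x0 := le_trans (le_add_right le_rfl) (hu.trans (hgyL.trans (hLle 0)))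
    exact (lt_of_le_of_lt h2 hx0.lt_top).ne
  have hce : c * edist y u ≤ 0 := by
    have h1 : g u + c * edist y u ≤ g u + 0 := by
      rw [add_zero]; exact hu.trans (hgyL.trans hLu)
    exact (ENNReal.add_le_add_iff_left hufin).mp h1
  have : edist y u = 0 := by
    rcases mul_eq_zero.mp (le_antisymm hce zero_le) with h | h
    · exact absurd h hc0
    · exact h
  exact (edist_eq_zero.mp this).symm

private lemma ofReal_le_erealPos {ρ : ℝ} {a : EReal} (h : (ρ : EReal) ≤ a) :
    ENNReal.ofReal ρ ≤ erealPos a := by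
  unfold erealPos
  split_ifs with ha
  · exact le_top
  · rcases eq_or_ne a ⊥ with hb | hb
    · rw [hb, le_bot_iff] at h; exact absurd h (EReal.coe_ne_bot ρ)
    · apply ENNReal.ofReal_le_ofReal
      rw [← EReal.coe_le_coe_iff, EReal.coe_toReal ha hb]
      exact h

private lemma lsc_erealPos {X : Type*} [MetricSpace X] {f : X → EReal}
    (hlsc : LowerSemicontinuous f) (hbot : ∀ x, f x ≠ ⊥) :
    LowerSemicontinuous (fun u => erealPos (f u)) := by
  intro x b hb
  -- find M : ℝ with b < ofReal M and (M : EReal) < f x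
  obtain ⟨M, hM1, hM2⟩ : ∃ M : ℝ, b < ENNReal.ofReal M ∧ (M : EReal) < f x := by
    have hbt : b ≠ ⊤ := by
      intro h; rw [h] at hb; exact absurd hb (not_lt.mpr le_top)
    by_cases hfx : f x = ⊤
    · refine ⟨b.toReal + 1, ?_, by rw [hfx]; exact EReal.coe_lt_top _⟩
      conv_lhs => rw [← ENNReal.ofReal_toReal hbt]
      exact (ENNReal.ofReal_lt_ofReal_iff (by positivity)).mpr
        (by linarith [ENNReal.toReal_nonneg (a := b)])
    · simp only [erealPos, if_neg hfx] at hb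
      set t := (f x).toReal with ht
      have h1 : b.toReal < t := by
        have := ENNReal.toReal_lt_toReal hbt ENNReal.ofReal_ne_top |>.mpr hb
        rwa [ENNReal.toReal_ofReal_eq_iff.mpr ?_] at this
        · by_contra h
          push_neg at h
          rw [ENNReal.ofReal_eq_zero.mpr h.le] at hb
          exact absurd hb (not_lt.mpr zero_le)
      refine ⟨(b.toReal + t) / 2, ?_, ?_⟩
      · conv_lhs => rw [← ENNReal.ofReal_toReal hbt]
        refine (ENNReal.ofReal_lt_ofReal_iff ?_).mpr (by linarith)
        have := ENNReal.toReal_nonneg (a := b); linarith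
      · conv_rhs => rw [← EReal.coe_toReal hfx (hbot x)]
        exact EReal.coe_lt_coe_iff.mpr (by linarith)
  filter_upwards [hlsc x M hM2] with u hu
  exact hM1.trans_le (ofReal_le_erealPos hu.le)

private lemma erealPos_lt_of_lt {a : EReal} {A : ℝ≥0∞} (h0 : 0 < a) (h : a < (A : EReal)) :
    erealPos a < A := by
  have hat : a ≠ ⊤ := (h.trans_le le_top).ne
  unfold erealPos
  rw [if_neg hat]
  have hab : a ≠ ⊥ := fun hb => absurd (hb ▸ h0) (not_lt.mpr bot_le)
  have h2 : 0 < a.toReal := by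
    have h3 := h0
    rw [← EReal.coe_toReal hat hab] at h3
    exact_mod_cast h3
  rcases eq_or_ne A ⊤ with hA | hA
  · rw [hA]; exact ENNReal.ofReal_lt_top
  · have hAr : ((A.toReal : ℝ) : EReal) = (A : EReal) := by
      rw [← EReal.toReal_coe_ennreal (x := A)]
      exact EReal.coe_toReal (by simp [EReal.coe_ennreal_eq_top_iff, hA])
        (EReal.coe_ennreal_ne_bot A)
    have h1 : a.toReal < A.toReal := by
      rw [← hAr, ← EReal.coe_toReal hat hab] at h
      exact_mod_cast h
    calc ENNReal.ofReal a.toReal < ENNReal.ofReal A.toReal :=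
          (ENNReal.ofReal_lt_ofReal_iff (by linarith)).mpr h1
      _ ≤ A := ENNReal.ofReal_toReal_le

private lemma toReal_pos' {a : EReal} (h0 : 0 < a) (hat : a ≠ ⊤) : 0 < a.toReal := by
  have hab : a ≠ ⊥ := fun hb => absurd (hb ▸ h0) (not_lt.mpr bot_le)
  have h3 := h0
  rw [← EReal.coe_toReal hat hab] at h3
  exact_mod_cast h3


/-- Basic lemma on error bounds: if `X` is complete, `U` open, `f` lsc and
`|∇f|(x) > r > 0` for all `x ∈ U` with `f x > 0`, then for every `xb ∈ U` with
`f xb < r · d(xb, X∖U)` there is `ub` with `f ub ≤ 0` and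
`d(ub, xb) ≤ r⁻¹ (f xb)⁺`. -/
theorem basic_error_bound_lemma {X : Type*} [MetricSpace X] [CompleteSpace X]
    (U : Set X) (hU : IsOpen U) (f : X → EReal)
    (hlsc : LowerSemicontinuous f) (hbot : ∀ x, f x ≠ ⊥)
    (r : ℝ) (hr : 0 < r)
    (hslope : ∀ x ∈ U, 0 < f x → ENNReal.ofReal r < strongSlope f x)
    (xb : X) (hxb : xb ∈ U)
    (hsmall : f xb < ((ENNReal.ofReal r * infEdist xb Uᶜ : ℝ≥0∞) : EReal)) :
    ∃ ub : X, f ub ≤ 0 ∧ ENNReal.ofReal r * edist xb ub ≤ erealPos (f xb) := by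
  by_cases h0 : f xb ≤ 0
  · exact ⟨xb, h0, by simp [edist_self]⟩
  push_neg at h0
  have hfxb_top : f xb ≠ ⊤ := ne_top_of_lt hsmall
  have hc0 : ENNReal.ofReal r ≠ 0 := (ENNReal.ofReal_pos.mpr hr).ne'
  have hct : ENNReal.ofReal r ≠ ⊤ := ENNReal.ofReal_ne_top
  have hglsc : LowerSemicontinuous (fun u => erealPos (f u)) := lsc_erealPos hlsc hbot
  have hgxb : erealPos (f xb) ≠ ⊤ := by
    unfold erealPos; rw [if_neg hfxb_top]; exact ENNReal.ofReal_ne_top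
  obtain ⟨y, hy1, hy2⟩ := ekeland_aux (fun u => erealPos (f u)) hglsc
    (ENNReal.ofReal r) hc0 hct xb hgxb
  have hdxy : ENNReal.ofReal r * edist xb y ≤ erealPos (f xb) := le_trans le_add_self hy1
  refine ⟨y, ?_, hdxy⟩
  by_contra hfy'
  push_neg at hfy'
  have hgy_le : erealPos (f y) ≤ erealPos (f xb) := le_trans (le_add_right le_rfl) hy1
  have hfy_top : f y ≠ ⊤ := by
    intro h
    rw [show erealPos (f y) = ⊤ by unfold erealPos; rw [if_pos h]] at hgy_le
    exact hgxb (top_le_iff.mp hgy_le)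
  have hyU : y ∈ U := by
    have h2 : erealPos (f xb) < ENNReal.ofReal r * infEdist xb Uᶜ :=
      erealPos_lt_of_lt h0 hsmall
    have h3 : ENNReal.ofReal r * edist xb y < ENNReal.ofReal r * infEdist xb Uᶜ :=
      lt_of_le_of_lt hdxy h2
    by_contra h
    have hmem : y ∈ Uᶜ := h
    exact absurd (mul_le_mul_right (infEdist_le_edist_of_mem hmem) (ENNReal.ofReal r))
      (not_le.mpr h3)
  have hs := hslope y hyU hfy'
  rw [strongSlope, if_neg hfy_top] at hs
  refine absurd hs (not_lt.mpr ?_)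
  apply Filter.limsup_le_of_le (by isBoundedDefault)
  have hev1 : ∀ᶠ u in 𝓝[≠] y, (0 : EReal) < f u :=
    eventually_nhdsWithin_of_eventually_nhds (hlsc y 0 hfy')
  filter_upwards [hev1, eventually_mem_nhdsWithin] with u hu1 hu2
  rw [Set.mem_compl_singleton_iff] at hu2
  apply ENNReal.ofReal_le_ofReal
  rcases eq_or_ne (f u) ⊤ with hfu | hfu
  · rw [hfu, EReal.sub_top]
    simp [hr.le]
  · have hub : f u ≠ ⊥ := hbot u
    have hd0 : 0 < dist y u := dist_pos.mpr (Ne.symm hu2)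
    have hlt : erealPos (f y) < erealPos (f u) + ENNReal.ofReal r * edist y u := by
      by_contra h; push_neg at h; exact hu2 (hy2 u h)
    rw [show erealPos (f y) = ENNReal.ofReal (f y).toReal by
        unfold erealPos; rw [if_neg hfy_top],
      show erealPos (f u) = ENNReal.ofReal (f u).toReal by
        unfold erealPos; rw [if_neg hfu],
      edist_dist, ← ENNReal.ofReal_mul hr.le,
      ← ENNReal.ofReal_add (toReal_pos' hu1 hfu).le (by positivity)] at hlt
    have hty : (f y).toReal < (f u).toReal + r * dist y u := by
      by_contra hcon
      push_neg at hcon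
      exact absurd (ENNReal.ofReal_le_ofReal hcon) (not_le.mpr hlt)
    rw [EReal.toReal_sub hfy_top (hbot y) hfu hub, div_le_iff₀ hd0]
    linarith
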